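/- arXiv:2304.13003 — 3 statements merged into one kernel-verified Lean document; each statement's English description precedes it below -/
import Mathlib

section
/- Let {λ_k} be a strictly decreasing nonnegative summable sequence and suppose {a_{nk}}_{k≥1} are sequences with Σ_{k=1}^∞ a_{nk}² ≤ 1 for each n, and Σ_{k=1}^∞ a_{nk}² λ_k → λ₁ as n → ∞, where λ₁ > λ₂ > ⋯ ≥ 0. Then a_{n1}² → 1 and Σ_{k=2}^∞ a_{nk}² → 0 as n → ∞. -/
open Filter

/-- If `λ₁ > λ₂ > ⋯ ≥ 0` is summable, `Σ_k a_{nk}² ≤ 1` for each `n`, and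
`Σ_k a_{nk}² λ_k → λ₁`, then `a_{n1}² → 1` and `Σ_{k≥2} a_{nk}² → 0`.
(Indices are 0-based: `lam 0` is `λ₁`.) -/
theorem stmt_5 (lam : ℕ → ℝ) (hpos : ∀ k, 0 ≤ lam k) (hanti : StrictAnti lam)
    (hsum : Summable lam)
    (a : ℕ → ℕ → ℝ)
    (hsq : ∀ n, Summable (fun k => (a n k) ^ 2))
    (hle : ∀ n, (∑' k, (a n k) ^ 2) ≤ 1)
    (hconv : Tendsto (fun n => ∑' k, (a n k) ^ 2 * lam k) atTop (nhds (lam 0))) :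
    Tendsto (fun n => (a n 0) ^ 2) atTop (nhds 1) ∧
      Tendsto (fun n => ∑' k, (a n (k + 1)) ^ 2) atTop (nhds 0) := by
  have h01 : lam 1 < lam 0 := hanti (by norm_num)
  have hd : 0 < lam 0 - lam 1 := by linarith
  -- summability facts
  have hshift : ∀ n, Summable (fun k => (a n (k + 1)) ^ 2) := fun n =>
    (hsq n).comp_injective (add_left_injective 1)
  have hsl : ∀ n, Summable (fun k => (a n k) ^ 2 * lam k) := by
    intro n
    refine Summable.of_nonneg_of_le (fun k => mul_nonneg (by positivity) (hpos k))
      (fun k => ?_) ((hsq n).mul_right (lam 0))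
    exact mul_le_mul_of_nonneg_left (hanti.antitone (Nat.zero_le k)) (by positivity)
  have hslshift : ∀ n, Summable (fun k => (a n (k + 1)) ^ 2 * lam (k + 1)) := fun n =>
    (hsl n).comp_injective (add_left_injective 1)
  -- T n ≥ 0
  have hT0 : ∀ n, 0 ≤ (∑' k, (a n (k + 1)) ^ 2) := fun n =>
    tsum_nonneg (fun k => by positivity)
  -- a n 0 ^ 2 + T n ≤ 1
  have hsplit : ∀ n, (a n 0) ^ 2 + (∑' k, (a n (k + 1)) ^ 2) ≤ 1 := by
    intro n
    have := Summable.tsum_eq_zero_add (hsq n)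
    calc (a n 0) ^ 2 + (∑' k, (a n (k + 1)) ^ 2) = ∑' k, (a n k) ^ 2 := this.symm
      _ ≤ 1 := hle n
  have ha1 : ∀ n, (a n 0) ^ 2 ≤ 1 := fun n => by
    have := hsplit n; have := hT0 n; linarith
  -- key inequality: S' n ≤ a0² λ0 + λ1 * T n
  have hkey : ∀ n, (∑' k, (a n k) ^ 2 * lam k) ≤
      (a n 0) ^ 2 * lam 0 + lam 1 * (∑' k, (a n (k + 1)) ^ 2) := by
    intro n
    rw [Summable.tsum_eq_zero_add (hsl n)]
    gcongr
    rw [← tsum_mul_left]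
    refine Summable.tsum_le_tsum (fun k => ?_) (hslshift n) ((hshift n).mul_left (lam 1))
    rw [mul_comm (lam 1)]
    exact mul_le_mul_of_nonneg_left (hanti.antitone (by omega)) (by positivity)
  -- bounds for squeeze
  have hlow : ∀ n, ((∑' k, (a n k) ^ 2 * lam k) - lam 1) / (lam 0 - lam 1) ≤ (a n 0) ^ 2 := by
    intro n
    rw [div_le_iff₀ hd]
    have h1 := hkey n
    have h2 := hsplit n
    have h3 : lam 1 * (∑' k, (a n (k + 1)) ^ 2) ≤ lam 1 * (1 - (a n 0) ^ 2) := by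
      have : (∑' k, (a n (k + 1)) ^ 2) ≤ 1 - (a n 0) ^ 2 := by linarith
      exact mul_le_mul_of_nonneg_left this (hpos 1)
    nlinarith
  have hhigh : ∀ n, (∑' k, (a n (k + 1)) ^ 2) ≤
      (lam 0 - (∑' k, (a n k) ^ 2 * lam k)) / (lam 0 - lam 1) := by
    intro n
    rw [le_div_iff₀ hd]
    have h1 := hkey n
    have h2 := hsplit n
    have h3 : (a n 0) ^ 2 * lam 0 ≤ (1 - (∑' k, (a n (k + 1)) ^ 2)) * lam 0 := by
      have : (a n 0) ^ 2 ≤ 1 - (∑' k, (a n (k + 1)) ^ 2) := by linarith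
      exact mul_le_mul_of_nonneg_right this (hpos 0)
    nlinarith
  constructor
  · have hlim : Tendsto (fun n => ((∑' k, (a n k) ^ 2 * lam k) - lam 1) / (lam 0 - lam 1))
        atTop (nhds 1) := by
      have := (hconv.sub_const (lam 1)).div_const (lam 0 - lam 1)
      simpa [div_self hd.ne'] using this
    exact tendsto_of_tendsto_of_tendsto_of_le_of_le hlim tendsto_const_nhds hlow ha1
  · have hlim : Tendsto (fun n => (lam 0 - (∑' k, (a n k) ^ 2 * lam k)) / (lam 0 - lam 1))
        atTop (nhds 0) := by
      have := (((tendsto_const_nhds (x := lam 0)).sub hconv).div_const (lam 0 - lam 1))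
      simpa using this
    exact tendsto_of_tendsto_of_tendsto_of_le_of_le tendsto_const_nhds hlim hT0 hhigh
end

section
/- Let {λ_k} satisfy λ₁ > λ₂ > ⋯ ≥ 0 with Σ_k λ_k < ∞. Fix K ≥ 1. Suppose for each n, Σ_{k=1}^∞ a_{nk}² ≤ 1 and Σ_{k=K+1}^∞ a_{nk}² λ_k → λ_{K+1} as n → ∞. Then a_{n(K+1)}² → 1 and Σ_{k=1}^K a_{nk}² + Σ_{k=K+2}^∞ a_{nk}² → 0. -/
open Filter

/-- Induction step: if `λ₁ > λ₂ > ⋯ ≥ 0` is summable, `Σ_k a_{nk}² ≤ 1`, and the tail sum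
`Σ_{k=K+1}^∞ a_{nk}² λ_k → λ_{K+1}`, then `a_{n(K+1)}² → 1` and
`Σ_{k=1}^K a_{nk}² + Σ_{k=K+2}^∞ a_{nk}² → 0`.
(Indices are 0-based: `lam K` is `λ_{K+1}`, and the tail `Σ_{k=K+1}^∞` becomes
`∑' k, ⬝ (k + K)`.) -/
theorem stmt_6 (K : ℕ) (hK : 1 ≤ K)
    (lam : ℕ → ℝ) (hpos : ∀ k, 0 ≤ lam k) (hanti : StrictAnti lam)
    (hsum : Summable lam)
    (a : ℕ → ℕ → ℝ)
    (hsq : ∀ n, Summable (fun k => (a n k) ^ 2))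
    (hle : ∀ n, (∑' k, (a n k) ^ 2) ≤ 1)
    (hconv : Tendsto (fun n => ∑' k, (a n (k + K)) ^ 2 * lam (k + K)) atTop (nhds (lam K))) :
    Tendsto (fun n => (a n K) ^ 2) atTop (nhds 1) ∧
      Tendsto (fun n => (∑ k ∈ Finset.range K, (a n k) ^ 2)
        + ∑' k, (a n (k + K + 1)) ^ 2) atTop (nhds 0) := by
  set c := lam K - lam (K + 1) with hc
  have hcpos : 0 < c := sub_pos.2 (hanti (Nat.lt_succ_self K))
  have hsq' : ∀ n, Summable (fun k => (a n (k + K)) ^ 2) :=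
    fun n => (summable_nat_add_iff K).2 (hsq n)
  have hsq'' : ∀ n, Summable (fun k => (a n (k + K + 1)) ^ 2) := by
    intro n
    have := (summable_nat_add_iff (K + 1)).2 (hsq n)
    simpa [Nat.add_assoc] using this
  have ht_nonneg : ∀ n, 0 ≤ ∑' k, (a n (k + K + 1)) ^ 2 :=
    fun n => tsum_nonneg fun k => sq_nonneg _
  have hfin_nonneg : ∀ n, 0 ≤ ∑ k ∈ Finset.range K, (a n k) ^ 2 :=
    fun n => Finset.sum_nonneg fun k _ => sq_nonneg _
  -- decomposition: ∑ finset + s_n + t_n ≤ 1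
  have hdecomp : ∀ n, (∑ k ∈ Finset.range K, (a n k) ^ 2)
      + ((a n K) ^ 2 + ∑' k, (a n (k + K + 1)) ^ 2) ≤ 1 := by
    intro n
    have h1 := Summable.sum_add_tsum_nat_add K (hsq n)
    have h2 : (∑' k, (a n (k + K)) ^ 2) = (a n K) ^ 2 + ∑' k, (a n (k + K + 1)) ^ 2 := by
      rw [Summable.tsum_eq_zero_add (hsq' n)]
      simp [Nat.add_right_comm]
    calc (∑ k ∈ Finset.range K, (a n k) ^ 2)
        + ((a n K) ^ 2 + ∑' k, (a n (k + K + 1)) ^ 2)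
        = (∑ k ∈ Finset.range K, (a n k) ^ 2) + ∑' k, (a n (k + K)) ^ 2 := by rw [h2]
      _ = ∑' k, (a n k) ^ 2 := h1
      _ ≤ 1 := hle n
  -- key lower bound for a n K ^ 2
  have hkey : ∀ n, ((∑' k, (a n (k + K)) ^ 2 * lam (k + K)) - lam (K + 1)) / c
      ≤ (a n K) ^ 2 := by
    intro n
    have hsplit : (∑' k, (a n (k + K)) ^ 2 * lam (k + K))
        = (a n K) ^ 2 * lam K + ∑' k, (a n (k + K + 1)) ^ 2 * lam (k + K + 1) := by
      have hsl : Summable (fun k => (a n (k + K)) ^ 2 * lam (k + K)) := by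
        refine Summable.of_nonneg_of_le (fun k => mul_nonneg (sq_nonneg _) (hpos _))
          (fun k => ?_) ((hsq' n).mul_right (lam K))
        exact mul_le_mul_of_nonneg_left (hanti.antitone (Nat.le_add_left K k)) (sq_nonneg _)
      rw [Summable.tsum_eq_zero_add hsl]
      simp [Nat.add_right_comm]
    have htail_le : (∑' k, (a n (k + K + 1)) ^ 2 * lam (k + K + 1))
        ≤ (∑' k, (a n (k + K + 1)) ^ 2) * lam (K + 1) := by
      have hsl : Summable (fun k => (a n (k + K + 1)) ^ 2 * lam (k + K + 1)) := by
        refine Summable.of_nonneg_of_le (fun k => mul_nonneg (sq_nonneg _) (hpos _))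
          (fun k => ?_) ((hsq'' n).mul_right (lam (K + 1)))
        exact mul_le_mul_of_nonneg_left
          (hanti.antitone (by omega : K + 1 ≤ k + K + 1)) (sq_nonneg _)
      rw [← tsum_mul_right]
      exact Summable.tsum_le_tsum (fun k => mul_le_mul_of_nonneg_left
        (hanti.antitone (by omega : K + 1 ≤ k + K + 1)) (sq_nonneg _)) hsl
        ((hsq'' n).mul_right _)
    have ht_le : (∑' k, (a n (k + K + 1)) ^ 2) ≤ 1 - (a n K) ^ 2 := by
      have := hdecomp n
      have := hfin_nonneg n
      linarith
    rw [div_le_iff₀ hcpos]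
    have h1 := hsplit
    have h2 := htail_le
    have h3 := ht_le
    have hl1 : 0 ≤ lam (K + 1) := hpos _
    nlinarith [ht_nonneg n]
  -- first conclusion
  have h1 : Tendsto (fun n => (a n K) ^ 2) atTop (nhds 1) := by
    have hupper : ∀ n, (a n K) ^ 2 ≤ 1 := by
      intro n
      have := hdecomp n
      have := hfin_nonneg n
      have := ht_nonneg n
      linarith
    have hlow : Tendsto (fun n => ((∑' k, (a n (k + K)) ^ 2 * lam (k + K)) - lam (K + 1)) / c)
        atTop (nhds 1) := by
      have := (hconv.sub_const (lam (K + 1))).div_const c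
      simpa [← hc, div_self hcpos.ne'] using this
    exact tendsto_of_tendsto_of_tendsto_of_le_of_le hlow tendsto_const_nhds
      (fun n => hkey n) hupper
  refine ⟨h1, ?_⟩
  have hlim : Tendsto (fun n => 1 - (a n K) ^ 2) atTop (nhds 0) := by
    have := (tendsto_const_nhds (x := (1 : ℝ))).sub h1
    simpa using this
  refine tendsto_of_tendsto_of_tendsto_of_le_of_le tendsto_const_nhds hlim
    (fun n => add_nonneg (hfin_nonneg n) (ht_nonneg n)) (fun n => ?_)
  have := hdecomp n
  linarith
end

section
/- Let H be a Hilbert space, {f_n} a sequence in H with ‖f_n‖ ≤ 1, and φ ∈ H with ‖φ‖ = 1. Let V₀ be a self-adjoint nonneg. trace-class operator with simple largest eigenvalue λ₁ and eigenvector φ. If ⟨f_n, V₀ f_n⟩ → λ₁, then there exist signs S_n ∈ {−1,1} such that ‖S_n f_n − φ‖ → 0. -/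
open Filter

/-- If `V₀ = Σ_k λ_k ⟨φ_k, ·⟩ φ_k` is a self-adjoint nonnegative trace-class operator with
simple largest eigenvalue `λ₁` (eigenvector `φ₁`), `‖f_n‖ ≤ 1`, and `⟨f_n, V₀ f_n⟩ → λ₁`,
then there are signs `S_n ∈ {−1,1}` with `‖S_n f_n − φ₁‖ → 0`.
(0-based indices: `lam 0 = λ₁`, `φ 0 = φ₁`.) -/
theorem stmt_15 {H : Type*} [NormedAddCommGroup H] [InnerProductSpace ℝ H] [CompleteSpace H]
    (φ : ℕ → H) (hφ : Orthonormal ℝ φ)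
    (lam : ℕ → ℝ) (hnn : ∀ k, 0 ≤ lam k) (hanti : StrictAnti lam) (hsum : Summable lam)
    (V₀ : H →L[ℝ] H)
    (hV₀ : ∀ f : H, V₀ f = ∑' k, (lam k * (inner ℝ (φ k) f : ℝ)) • φ k)
    (f : ℕ → H) (hf : ∀ n, ‖f n‖ ≤ 1)
    (hconv : Tendsto (fun n => (inner ℝ (f n) (V₀ (f n)) : ℝ)) atTop (nhds (lam 0))) :
    ∃ S : ℕ → ℝ, (∀ n, S n = 1 ∨ S n = -1) ∧
      Tendsto (fun n => ‖S n • f n - φ 0‖) atTop (nhds 0) := by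
  set a : ℕ → ℝ := fun n => (inner ℝ (φ 0) (f n) : ℝ) with ha
  have hgap : 0 < lam 0 - lam 1 := sub_pos.mpr (hanti (by norm_num))
  -- Bessel-type summability for any g
  have key : ∀ g : H, ‖g‖ ≤ 1 →
      (inner ℝ g (V₀ g) : ℝ) ≤ lam 1 + (lam 0 - lam 1) * (inner ℝ (φ 0) g : ℝ)^2 := by
    intro g hg
    have hbes : Summable fun k => ‖(inner ℝ (φ k) g : ℝ)‖ ^ 2 := hφ.inner_products_summable g
    have hbes' : Summable fun k => (inner ℝ (φ k) g : ℝ) ^ 2 := by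
      simpa [Real.norm_eq_abs, sq_abs] using hbes
    -- summability of the vector series
    have hsq : Summable fun k => ‖(lam k * (inner ℝ (φ k) g : ℝ))‖ ^ 2 := by
      apply Summable.of_nonneg_of_le (fun k => by positivity)
        (fun k => ?_) (hbes'.mul_left ((lam 0)^2))
      have h1 : |lam k| ≤ lam 0 := by
        rw [abs_of_nonneg (hnn k)]
        exact (hanti.antitone (Nat.zero_le k))
      calc ‖lam k * (inner ℝ (φ k) g : ℝ)‖ ^ 2 = (lam k)^2 * (inner ℝ (φ k) g : ℝ)^2 := by
            rw [Real.norm_eq_abs, abs_mul]; ring_nf; rw [sq_abs, sq_abs]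
        _ ≤ (lam 0)^2 * (inner ℝ (φ k) g : ℝ)^2 := by
            apply mul_le_mul_of_nonneg_right _ (sq_nonneg _)
            calc (lam k)^2 = |lam k|^2 := (sq_abs _).symm
              _ ≤ (lam 0)^2 := by
                  apply sq_le_sq' _ h1
                  linarith [abs_nonneg (lam k)]
        _ = (lam 0)^2 * (inner ℝ (φ k) g : ℝ)^2 := rfl
    have hvs : Summable fun k => (lam k * (inner ℝ (φ k) g : ℝ)) • φ k := by
      have := (hφ.orthogonalFamily.summable_iff_norm_sq_summable
        (fun k => (lam k * (inner ℝ (φ k) g : ℝ)))).mpr hsq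
      simpa [LinearIsometry.toSpanSingleton_apply] using this
    -- inner ℝ g (V₀ g) = ∑' lam k * a_k²
    have heq : (inner ℝ g (V₀ g) : ℝ) = ∑' k, lam k * (inner ℝ (φ k) g : ℝ)^2 := by
      rw [hV₀ g]
      have h2 : HasSum (fun k => (inner ℝ g ((lam k * (inner ℝ (φ k) g : ℝ)) • φ k) : ℝ))
          (inner ℝ g (∑' k, (lam k * (inner ℝ (φ k) g : ℝ)) • φ k) : ℝ) :=
        (innerSL ℝ g).hasSum hvs.hasSum
      have h3 : (fun k => (inner ℝ g ((lam k * (inner ℝ (φ k) g : ℝ)) • φ k) : ℝ))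
          = fun k => lam k * (inner ℝ (φ k) g : ℝ)^2 := by
        funext k
        rw [real_inner_smul_right, real_inner_comm]
        ring
      rw [h3] at h2
      exact h2.tsum_eq.symm
    rw [heq]
    have hsum2 : Summable fun k => lam k * (inner ℝ (φ k) g : ℝ)^2 := by
      apply Summable.of_nonneg_of_le (fun k => mul_nonneg (hnn k) (sq_nonneg _))
        (fun k => ?_) (hbes'.mul_left (lam 0))
      exact mul_le_mul_of_nonneg_right (hanti.antitone (Nat.zero_le k)) (sq_nonneg _)
    -- termwise bound
    have hrhsum : Summable fun k => lam 1 * (inner ℝ (φ k) g : ℝ)^2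
        + (if k = 0 then (lam 0 - lam 1) * (inner ℝ (φ 0) g : ℝ)^2 else 0) := by
      apply Summable.add (hbes'.mul_left (lam 1))
      exact summable_of_ne_finset_zero (s := {0}) (by intro k hk; simp at hk; simp [hk])
    have hle : ∑' k, lam k * (inner ℝ (φ k) g : ℝ)^2
        ≤ ∑' k, (lam 1 * (inner ℝ (φ k) g : ℝ)^2
          + (if k = 0 then (lam 0 - lam 1) * (inner ℝ (φ 0) g : ℝ)^2 else 0)) := by
      apply Summable.tsum_le_tsum _ hsum2 hrhsum
      intro k
      rcases Nat.eq_zero_or_pos k with rfl | hk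
      · simp; ring_nf; simp
      · have : lam k ≤ lam 1 := hanti.antitone hk
        have := mul_le_mul_of_nonneg_right this (sq_nonneg ((inner ℝ (φ k) g : ℝ)))
        simp [Nat.pos_iff_ne_zero.mp hk]
        linarith
    rw [Summable.tsum_add (hbes'.mul_left (lam 1))
      (summable_of_ne_finset_zero (s := {0}) (by intro k hk; simp at hk; simp [hk]))] at hle
    have ht1 : ∑' k, lam 1 * (inner ℝ (φ k) g : ℝ)^2 ≤ lam 1 := by
      rw [tsum_mul_left]
      have hb : ∑' k, (inner ℝ (φ k) g : ℝ)^2 ≤ 1 := by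
        have := hφ.tsum_inner_products_le g
        have h1 : ∑' k, ‖(inner ℝ (φ k) g : ℝ)‖ ^ 2 = ∑' k, (inner ℝ (φ k) g : ℝ)^2 := by
          congr 1; funext k; rw [Real.norm_eq_abs, sq_abs]
        rw [h1] at this
        calc ∑' k, (inner ℝ (φ k) g : ℝ)^2 ≤ ‖g‖^2 := this
          _ ≤ 1 := by nlinarith [norm_nonneg g]
      calc lam 1 * ∑' k, (inner ℝ (φ k) g : ℝ)^2 ≤ lam 1 * 1 :=
            mul_le_mul_of_nonneg_left hb (hnn 1)
        _ = lam 1 := mul_one _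
    have ht2 : ∑' k, (if k = 0 then (lam 0 - lam 1) * (inner ℝ (φ 0) g : ℝ)^2 else 0)
        = (lam 0 - lam 1) * (inner ℝ (φ 0) g : ℝ)^2 := by
      rw [tsum_eq_single 0 (by intro k hk; simp [hk])]
      simp
    rw [ht2] at hle
    linarith
  -- a n ^ 2 → 1
  have hasq : Tendsto (fun n => (a n)^2) atTop (nhds 1) := by
    have hup : ∀ n, (a n)^2 ≤ 1 := by
      intro n
      have := abs_real_inner_le_norm (φ 0) (f n)
      have h1 : ‖φ 0‖ = 1 := hφ.1 0
      rw [h1, one_mul] at this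
      calc (a n)^2 = |a n|^2 := (sq_abs _).symm
        _ ≤ 1 := by nlinarith [abs_nonneg (a n), hf n]
    have hlow : ∀ n, ((inner ℝ (f n) (V₀ (f n)) : ℝ) - lam 1) / (lam 0 - lam 1) ≤ (a n)^2 := by
      intro n
      rw [div_le_iff₀ hgap]
      have := key (f n) (hf n)
      linarith [this]
    apply tendsto_of_tendsto_of_tendsto_of_le_of_le _ tendsto_const_nhds hlow hup
    have : Tendsto (fun n => ((inner ℝ (f n) (V₀ (f n)) : ℝ) - lam 1) / (lam 0 - lam 1)) atTop
        (nhds ((lam 0 - lam 1) / (lam 0 - lam 1))) :=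
      ((hconv.sub tendsto_const_nhds).div_const _)
    rwa [div_self (ne_of_gt hgap)] at this
  have habs : Tendsto (fun n => |a n|) atTop (nhds 1) := by
    have := (Real.continuous_sqrt.tendsto 1).comp hasq
    simpa [Function.comp_def, Real.sqrt_sq_eq_abs] using this
  refine ⟨fun n => if 0 ≤ a n then 1 else -1, fun n => by by_cases h : 0 ≤ a n <;> simp [h], ?_⟩
  set S : ℕ → ℝ := fun n => if 0 ≤ a n then 1 else -1 with hS
  have hSa : ∀ n, S n * a n = |a n| := by
    intro n
    by_cases h : 0 ≤ a n
    · simp [hS, h, abs_of_nonneg h]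
    · simp [hS, h, abs_of_neg (lt_of_not_ge h)]
  have hnsq : ∀ n, ‖S n • f n - φ 0‖^2 ≤ 2 - 2 * |a n| := by
    intro n
    have hnorm : ‖S n • f n - φ 0‖^2
        = ‖S n • f n‖^2 - 2 * (inner ℝ (S n • f n) (φ 0) : ℝ) + ‖φ 0‖^2 :=
      norm_sub_sq_real _ _
    have hS2 : |S n| = 1 := by by_cases h : 0 ≤ a n <;> simp [hS, h]
    have h1 : ‖S n • f n‖^2 ≤ 1 := by
      rw [norm_smul, Real.norm_eq_abs, hS2, one_mul]
      nlinarith [norm_nonneg (f n), hf n]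
    have h2 : (inner ℝ (S n • f n) (φ 0) : ℝ) = |a n| := by
      rw [real_inner_smul_left, real_inner_comm]
      exact hSa n
    rw [hnorm, h2, hφ.1 0]
    norm_num
    linarith
  have hsqz : Tendsto (fun n => ‖S n • f n - φ 0‖^2) atTop (nhds 0) := by
    apply tendsto_of_tendsto_of_tendsto_of_le_of_le tendsto_const_nhds _
      (fun n => sq_nonneg _) hnsq
    have : Tendsto (fun n => 2 - 2 * |a n|) atTop (nhds (2 - 2 * 1)) :=
      tendsto_const_nhds.sub (habs.const_mul 2)
    simpa using this
  have := (Real.continuous_sqrt.tendsto 0).comp hsqz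
  simpa [Function.comp_def, Real.sqrt_sq_eq_abs, abs_of_nonneg (norm_nonneg _)] using this
end
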